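/- Let L be a biangular π-algebra, α ∈ π, and b_α = Σᵢ pᵢ ⊗ qᵢ ∈ L_α ⊗ L_{α⁻¹} the canonical copairing element for the non-degenerate form η(a,b) = Tr(μ_{ab}|_{L_1}). Then Σᵢ pᵢ·qᵢ = 1_L. -/

import Mathlib

/-- A `G`-algebra (`G`-graded associative unital `K`-algebra with projective
finite-type components), realized as a grading of an ambient algebra `A` by
submodules. -/
structure GradedPiAlgebra (K : Type*) [CommRing K] (A : Type*) [Ring A] [Algebra K A]
    (G : Type*) [Group G] [DecidableEq G] where
  comp : G → Submodule K A
  one_mem : (1 : A) ∈ comp 1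
  mul_mem : ∀ {α β : G} {a b : A}, a ∈ comp α → b ∈ comp β → a * b ∈ comp (α * β)
  internal : DirectSum.IsInternal comp
  projective : ∀ α : G, Module.Projective K (comp α)
  finite : ∀ α : G, Module.Finite K (comp α)

/-- A biangular `G`-algebra: a `G`-algebra `L` such that
(i) for every `ℓ ∈ L_1` and `α ∈ G`, `Tr(μ_ℓ|_{L_α}) = Tr(μ_ℓ|_{L_1})`, and
(ii) for every `α`, the bilinear form `η(a,b) = Tr(μ_{ab}|_{L_1})` on
`L_α ⊗ L_{α⁻¹}` is non-degenerate (both adjoint maps are bijective).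
Here `μ_ℓ` is left multiplication by `ℓ`, and restrictions of left multiplications
to components are encoded as linear endomorphisms `f` of the component whose
values agree with the multiplication. -/
structure BiangularAlgebra (K : Type*) [CommRing K] (A : Type*) [Ring A] [Algebra K A]
    (G : Type*) [Group G] [DecidableEq G] extends GradedPiAlgebra K A G where
  trace_cond : ∀ (α : G) {ℓ : A}, ℓ ∈ comp 1 →
    ∀ (f : comp α →ₗ[K] comp α) (g : comp 1 →ₗ[K] comp 1),
      (∀ x : comp α, (f x : A) = ℓ * (x : A)) →
      (∀ x : comp 1, (g x : A) = ℓ * (x : A)) →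
      LinearMap.trace K (comp α) f = LinearMap.trace K (comp 1) g
  nondeg : ∀ α : G, ∃ B : comp α →ₗ[K] (comp α⁻¹ →ₗ[K] K),
    (∀ (a : comp α) (b : comp α⁻¹) (f : comp 1 →ₗ[K] comp 1),
      (∀ x : comp 1, (f x : A) = (a : A) * (b : A) * (x : A)) →
      B a b = LinearMap.trace K (comp 1) f) ∧
    Function.Bijective B ∧ Function.Bijective B.flip

/-- Let `L` be a biangular `π`-algebra, `α ∈ π`, and
`b_α = Σᵢ pᵢ ⊗ qᵢ ∈ L_α ⊗ L_{α⁻¹}` the canonical copairing element for the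
non-degenerate form `η(a,b) = Tr(μ_{ab}|_{L_1})` (encoded by the function `e`
together with its defining trace property and the reproducing properties).
Then `Σᵢ pᵢ·qᵢ = 1_L`. -/
theorem biangular_copairing_mul_eq_one {K : Type*} [CommRing K]
    {A : Type*} [Ring A] [Algebra K A] {G : Type*} [Group G] [DecidableEq G]
    (S : BiangularAlgebra K A G) (α : G)
    (e : A → A → K)
    (he : ∀ (a b : A) (f : S.comp 1 →ₗ[K] S.comp 1),
      (∀ x : S.comp 1, (f x : A) = a * b * (x : A)) →
      e a b = LinearMap.trace K (S.comp 1) f)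
    (n : ℕ) (p q : Fin n → A)
    (hp : ∀ i, p i ∈ S.comp α) (hq : ∀ i, q i ∈ S.comp α⁻¹)
    (hrepP : ∀ a ∈ S.comp α, a = ∑ i, e a (q i) • p i)
    (hrepQ : ∀ b ∈ S.comp α⁻¹, b = ∑ i, e (p i) b • q i) :
    ∑ i, p i * q i = (1 : A) := by
  classical
  -- the projection onto the degree-one component
  let Eq := LinearEquiv.ofBijective (DirectSum.coeLinearMap S.comp) S.internal
  let π1 : A →ₗ[K] S.comp 1 :=
    (DirectSum.component K G (fun i => ↥(S.comp i)) 1) ∘ₗ Eq.symm.toLinearMap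
  have hπ : ∀ (a : A) (h : a ∈ S.comp 1), π1 a = ⟨a, h⟩ := by
    intro a h
    exact S.internal.ofBijective_coeLinearMap_of_mem h
  -- the "trace of multiplication on the degree-one component" functional
  let T : A →ₗ[K] K :=
  { toFun := fun a => LinearMap.trace K (S.comp 1)
      (π1 ∘ₗ LinearMap.mulLeft K a ∘ₗ (S.comp 1).subtype)
    map_add' := by
      intro a b
      have h : (π1 ∘ₗ LinearMap.mulLeft K (a + b) ∘ₗ (S.comp 1).subtype)
          = (π1 ∘ₗ LinearMap.mulLeft K a ∘ₗ (S.comp 1).subtype)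
            + (π1 ∘ₗ LinearMap.mulLeft K b ∘ₗ (S.comp 1).subtype) := by
        refine LinearMap.ext fun x => ?_
        simp [add_mul]
      simp only [h, map_add]
    map_smul' := by
      intro c a
      have h : (π1 ∘ₗ LinearMap.mulLeft K (c • a) ∘ₗ (S.comp 1).subtype)
          = c • (π1 ∘ₗ LinearMap.mulLeft K a ∘ₗ (S.comp 1).subtype) := by
        refine LinearMap.ext fun x => ?_
        simp [smul_mul_assoc]
      simp only [h, map_smul]
      rfl }
  have hT : ∀ (a : A) (f : S.comp 1 →ₗ[K] S.comp 1),
      (∀ x : S.comp 1, (f x : A) = a * (x : A)) →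
      T a = LinearMap.trace K (S.comp 1) f := by
    intro a f hf
    show LinearMap.trace K (S.comp 1) _ = _
    congr 1
    refine LinearMap.ext fun x => ?_
    have hm : a * (x : A) ∈ S.comp 1 := hf x ▸ (f x).2
    have : π1 (a * (x : A)) = ⟨a * (x : A), hm⟩ := hπ _ hm
    simp only [LinearMap.comp_apply, Submodule.subtype_apply, LinearMap.mulLeft_apply]
    rw [this]
    exact Subtype.ext (hf x).symm
  -- restriction of left multiplication
  have hres : ∀ (β : G) (a : A), a ∈ S.comp 1 → ∀ x ∈ S.comp β, a * x ∈ S.comp β := by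
    intro β a ha x hx
    have := S.mul_mem ha hx
    rwa [one_mul] at this
  have hTmul : ∀ (a : A) (ha : a ∈ S.comp 1),
      T a = LinearMap.trace K (S.comp 1) ((LinearMap.mulLeft K a).restrict (hres 1 a ha)) :=
    fun a ha => hT a _ (fun x => LinearMap.restrict_coe_apply _ _ _)
  -- link between e and T
  have he_T : ∀ (a b : A), a * b ∈ S.comp 1 → e a b = T (a * b) := by
    intro a b hab
    rw [hT (a * b) ((LinearMap.mulLeft K (a * b)).restrict (hres 1 _ hab))
      (fun x => LinearMap.restrict_coe_apply _ _ _)]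
    exact he a b _ (fun x => LinearMap.restrict_coe_apply _ _ _)
  -- the element u
  set u : A := ∑ i, p i * q i with hu_def
  have hpq1 : ∀ i, p i * q i ∈ S.comp 1 := by
    intro i
    have := S.mul_mem (hp i) (hq i)
    rwa [mul_inv_cancel] at this
  have hu : u ∈ S.comp 1 := Submodule.sum_mem _ fun i _ => hpq1 i
  -- main claim: T ℓ = T (ℓ * u) for ℓ ∈ comp 1
  have main : ∀ ℓ ∈ S.comp 1, T ℓ = T (ℓ * u) := by
    intro ℓ hℓ
    have hℓu : ℓ * u ∈ S.comp 1 := by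
      have := S.mul_mem hℓ hu; rwa [one_mul] at this
    -- traces over comp α
    let F : S.comp α →ₗ[K] S.comp α := (LinearMap.mulLeft K ℓ).restrict (hres α ℓ hℓ)
    let F' : S.comp α →ₗ[K] S.comp α := (LinearMap.mulLeft K (ℓ * u)).restrict (hres α _ hℓu)
    have t1 : T ℓ = LinearMap.trace K (S.comp α) F := by
      rw [hTmul ℓ hℓ]
      exact (S.trace_cond α hℓ F _ (fun x => LinearMap.restrict_coe_apply _ _ _)
        (fun x => LinearMap.restrict_coe_apply _ _ _)).symm
    have t2 : T (ℓ * u) = LinearMap.trace K (S.comp α) F' := by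
      rw [hTmul _ hℓu]
      exact (S.trace_cond α hℓu F' _ (fun x => LinearMap.restrict_coe_apply _ _ _)
        (fun x => LinearMap.restrict_coe_apply _ _ _)).symm
    by_cases hfree : ∃ s : Finset ↥(S.comp α), Nonempty (Module.Basis s K ↥(S.comp α))
    · obtain ⟨s, ⟨b⟩⟩ := hfree
      -- compute trace of F via the copairing
      let P : Fin n → S.comp α := fun i => ⟨p i, hp i⟩
      let φ : Fin n → (S.comp α →ₗ[K] K) := fun i =>
        T ∘ₗ (LinearMap.mulRight K (q i)) ∘ₗ (LinearMap.mulLeft K ℓ) ∘ₗ (S.comp α).subtype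
      have hφ : ∀ (i : Fin n) (x : S.comp α), φ i x = T (ℓ * (x : A) * q i) := fun i x => rfl
      have hFdecomp : F = ∑ i, dualTensorHom K (S.comp α) (S.comp α) ((φ i) ⊗ₜ[K] (P i)) := by
        refine LinearMap.ext fun x => ?_
        apply Subtype.ext
        have hℓx : ℓ * (x : A) ∈ S.comp α := hres α ℓ hℓ _ x.2
        have hF : ((F x : S.comp α) : A) = ℓ * (x : A) :=
          LinearMap.restrict_coe_apply _ _ _
        rw [hF]
        have := hrepP (ℓ * (x : A)) hℓx
        rw [this]
        have coeRHS : ((((∑ i, dualTensorHom K (S.comp α) (S.comp α)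
            ((φ i) ⊗ₜ[K] (P i))) x) : S.comp α) : A)
            = ∑ i, φ i x • p i := by
          rw [LinearMap.sum_apply]
          rw [AddSubmonoidClass.coe_finset_sum]
          refine Finset.sum_congr rfl fun i _ => ?_
          rw [dualTensorHom_apply]
          rfl
        rw [coeRHS]
        refine Finset.sum_congr rfl fun i _ => ?_
        congr 1
        rw [hφ]
        exact he_T _ _ (by
          have := S.mul_mem hℓx (hq i)
          rwa [mul_inv_cancel] at this)
      have htr : LinearMap.trace K (S.comp α) F = ∑ i, φ i (P i) := by
        rw [hFdecomp, map_sum]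
        refine Finset.sum_congr rfl fun i _ => ?_
        have := LinearMap.congr_fun (LinearMap.trace_eq_contract_of_basis b)
          ((φ i) ⊗ₜ[K] (P i))
        rw [LinearMap.comp_apply] at this
        rw [this, contractLeft_apply]
      have hφP : ∀ i : Fin n, φ i (P i) = T (ℓ * p i * q i) := fun i => rfl
      rw [t1, htr]
      have : ∑ i, φ i (P i) = T (ℓ * u) := by
        rw [hu_def, Finset.mul_sum, map_sum]
        refine Finset.sum_congr rfl fun i _ => ?_
        rw [hφP, mul_assoc]
      rw [this]
    · have hz : LinearMap.trace K ↥(S.comp α) = 0 := by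
        rw [LinearMap.trace, dif_neg hfree]
      rw [t1, t2, hz]
      rfl
  -- conclude via non-degeneracy at 1
  obtain ⟨B, hB, _, hBflip⟩ := S.nondeg 1
  have hu' : u ∈ S.comp (1 : G)⁻¹ := by rw [inv_one]; exact hu
  have h1' : (1 : A) ∈ S.comp (1 : G)⁻¹ := by rw [inv_one]; exact S.one_mem
  have key : ∀ ℓ : S.comp 1, B ℓ ⟨u, hu'⟩ = B ℓ ⟨1, h1'⟩ := by
    intro ℓ
    have hℓu : (ℓ : A) * u ∈ S.comp 1 := by
      have := S.mul_mem ℓ.2 hu; rwa [one_mul] at this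
    have e1 : B ℓ ⟨u, hu'⟩ = T ((ℓ : A) * u) := by
      rw [hB ℓ ⟨u, hu'⟩ ((LinearMap.mulLeft K ((ℓ : A) * u)).restrict (hres 1 _ hℓu))
        (fun x => LinearMap.restrict_coe_apply _ _ _)]
      exact (hT _ _ (fun x => LinearMap.restrict_coe_apply _ _ _)).symm
    have e2 : B ℓ ⟨1, h1'⟩ = T ((ℓ : A) * 1) := by
      have hℓ1 : (ℓ : A) * 1 ∈ S.comp 1 := by rw [mul_one]; exact ℓ.2
      rw [hB ℓ ⟨1, h1'⟩ ((LinearMap.mulLeft K ((ℓ : A) * 1)).restrict (hres 1 _ hℓ1))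
        (fun x => LinearMap.restrict_coe_apply _ _ _)]
      exact (hT _ _ (fun x => LinearMap.restrict_coe_apply _ _ _)).symm
    rw [e1, e2, mul_one]
    exact (main (ℓ : A) ℓ.2).symm
  have : (⟨u, hu'⟩ : S.comp (1 : G)⁻¹) = ⟨1, h1'⟩ := by
    apply hBflip.injective
    refine LinearMap.ext fun ℓ => ?_
    simpa using key ℓ
  exact congrArg Subtype.val this
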